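/- Let g_i(w_2, w_3) in Z/2[w_2, w_3] be defined by g_0 = 1, g_1 = 0, and g_i = w_2 g_{i-2} + w_3 g_{i-3} for i \geq 2. Then for every i \geq 2 that is not of the form 2^t - 3 for some integer t \geq 2, the polynomial g_i(w_2, w_3) is nonzero. -/

import Mathlib

open MvPolynomial

private lemma two_eq_zero' : (2 : Polynomial (ZMod 2)) = 0 := by
  have := CharP.cast_eq_zero (Polynomial (ZMod 2)) 2
  exact_mod_cast this

private lemma pow_aux : ∀ m : ℕ, 0 < m →
    (Polynomial.X : Polynomial (ZMod 2)) ^ m + (Polynomial.X + 1) ^ m + 1 = 0 →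
    ∃ t : ℕ, m = 2 ^ t := by
  intro m
  induction m using Nat.strong_induction_on with
  | _ m ih =>
    intro hm h
    rcases Nat.even_or_odd m with ⟨k, hk⟩ | hodd
    · have hk0 : 0 < k := by omega
      have hklt : k < m := by omega
      have hm2 : m = k * 2 := by omega
      have hsq : ((Polynomial.X : Polynomial (ZMod 2)) ^ k + (Polynomial.X + 1) ^ k + 1) ^ 2
          = (Polynomial.X : Polynomial (ZMod 2)) ^ m + (Polynomial.X + 1) ^ m + 1 := by
        rw [CharTwo.add_sq, CharTwo.add_sq, one_pow, ← pow_mul, ← pow_mul, ← hm2]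
      rw [h] at hsq
      have hbase : (Polynomial.X : Polynomial (ZMod 2)) ^ k + (Polynomial.X + 1) ^ k + 1 = 0 :=
        pow_eq_zero_iff (by norm_num) |>.mp hsq
      obtain ⟨t, ht⟩ := ih k hklt hk0 hbase
      exact ⟨t + 1, by rw [pow_succ]; omega⟩
    · rcases eq_or_lt_of_le (show 1 ≤ m from hm) with h1 | h3
      · exact ⟨0, by omega⟩
      · exfalso
        have hc := congrArg (fun p => Polynomial.coeff p 1) h
        simp only [Polynomial.coeff_add, Polynomial.coeff_X_pow,
          Polynomial.coeff_X_add_one_pow, Polynomial.coeff_one, Polynomial.coeff_zero] at hc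
        have hm1 : m ≠ 1 := by omega
        rw [if_neg (by omega), if_neg (by norm_num)] at hc
        simp only [Nat.choose_one_right, zero_add, add_zero] at hc
        have : (2 : ℕ) ∣ m := (ZMod.natCast_eq_zero_iff m 2).mp hc
        rw [Nat.odd_iff] at hodd
        omega

/-- In `ℤ/2[w₂, w₃]` (here `X 2`, `X 3` denote `w₂`, `w₃`), let `g i` be defined by
`g 0 = 1`, `g 1 = 0` and `g i = w₂ g_{i-2} + w₃ g_{i-3}` for `i ≥ 2` (with `g_j = 0` for
`j < 0`).  Then for every `i ≥ 2` which is not of the form `2^t - 3` with `t ≥ 2`,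
the polynomial `g i` is nonzero. -/
theorem g_ne_zero_of_not_pow_two_sub_three
    (g : ℕ → MvPolynomial ℕ (ZMod 2))
    (h0 : g 0 = 1) (h1 : g 1 = 0)
    (h2 : g 2 = X 2 * g 0)
    (hrec : ∀ i : ℕ, g (i + 3) = X 2 * g (i + 1) + X 3 * g i) :
    ∀ i : ℕ, 2 ≤ i → (¬ ∃ t : ℕ, 2 ≤ t ∧ i = 2 ^ t - 3) → g i ≠ 0 := by
  intro i hi hne hg
  set e : Polynomial (ZMod 2) := Polynomial.X ^ 2 + Polynomial.X + 1 with he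
  set d : Polynomial (ZMod 2) := Polynomial.X ^ 2 + Polynomial.X with hd
  set f : ℕ → Polynomial (ZMod 2) := fun n => if n = 2 then e else if n = 3 then d else 0
    with hf
  set q : ℕ → Polynomial (ZMod 2) := fun n => aeval f (g n) with hq
  have hq0 : q 0 = 1 := by simp [hq, h0]
  have hq1 : q 1 = 0 := by simp [hq, h1]
  have hq2 : q 2 = e := by simp [hq, h2, h0, hf]
  have hqrec : ∀ j : ℕ, q (j + 3) = e * q (j + 1) + d * q j := by
    intro j
    simp [hq, hrec j, hf]
  -- key root identities (char 2)
  have hx3 : (Polynomial.X : Polynomial (ZMod 2)) ^ 3 = e * Polynomial.X + d := by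
    rw [he, hd]; linear_combination (-(Polynomial.X ^ 2 + Polynomial.X :
      Polynomial (ZMod 2))) * two_eq_zero'
  have hx13 : ((Polynomial.X : Polynomial (ZMod 2)) + 1) ^ 3 = e * (Polynomial.X + 1) + d := by
    rw [he, hd]; ring
  have hone : (1 : Polynomial (ZMod 2)) = e + d := by
    rw [he, hd]; linear_combination (-(Polynomial.X ^ 2 + Polynomial.X :
      Polynomial (ZMod 2))) * two_eq_zero'
  have key : ∀ j : ℕ, d * q j
      = Polynomial.X ^ (j + 3) + (Polynomial.X + 1) ^ (j + 3) + 1 := by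
    intro j
    induction j using Nat.strong_induction_on with
    | _ j ih =>
      match j with
      | 0 =>
        rw [hq0, hd]
        linear_combination (-(Polynomial.X ^ 3 + Polynomial.X ^ 2 + Polynomial.X + 1 :
          Polynomial (ZMod 2))) * two_eq_zero'
      | 1 =>
        rw [hq1, hd]
        linear_combination (-(Polynomial.X ^ 4 + 2 * Polynomial.X ^ 3 + 3 * Polynomial.X ^ 2
          + 2 * Polynomial.X + 1 : Polynomial (ZMod 2))) * two_eq_zero'
      | 2 =>
        rw [hq2, hd, he]
        linear_combination (-(Polynomial.X ^ 5 + 2 * Polynomial.X ^ 4 + 4 * Polynomial.X ^ 3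
          + 4 * Polynomial.X ^ 2 + 2 * Polynomial.X + 1 : Polynomial (ZMod 2))) * two_eq_zero'
      | (j + 3) =>
        have k1 := ih (j + 1) (by omega)
        have k0 := ih j (by omega)
        rw [hqrec j]
        linear_combination e * k1 + d * k0 + Polynomial.X ^ (j + 3) * hx3
          + (Polynomial.X + 1) ^ (j + 3) * hx13 + hone
          + (2 * (Polynomial.X + Polynomial.X ^ 2 + Polynomial.X ^ 4 * Polynomial.X ^ j
            + Polynomial.X ^ 5 * Polynomial.X ^ j)) * two_eq_zero'
  have hqi : q i = 0 := by rw [hq]; simp [hg]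
  have hkey := key i
  rw [hqi, mul_zero] at hkey
  obtain ⟨t, ht⟩ := pow_aux (i + 3) (by omega) hkey.symm
  have ht2 : 2 ≤ t := by
    by_contra hlt
    interval_cases t <;> omega
  exact hne ⟨t, ht2, by omega⟩
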